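/- Let A, B ∈ M_m(ℂ) be positive contractions with A ≺_tr B, and let n ≥ 2. Then there exist positive contractions A', B' ∈ M_m(ℂ) such that: (i) A' ≺_tr B'; (ii) Tr(A') = Tr(B') ∈ {k/(n−1) : k ∈ ℕ ∪ {0}}; (iii) ‖A − A'‖ < 2/(n−1); and (iv) ‖B − B'‖ < 2/(n−1). -/

import Mathlib

open scoped Matrix Matrix.Norms.L2Operator ComplexOrder

/-- Eigenvalues of a Hermitian matrix listed in non-increasing order. -/
noncomputable def sortedEigs {m : ℕ} {A : Matrix (Fin m) (Fin m) ℂ}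
    (hA : A.IsHermitian) : Fin m → ℝ :=
  fun i => hA.eigenvalues (Tuple.sort hA.eigenvalues i.rev)

/-- `Maj hA hB` means `A ≺_tr B`. -/
def Maj {m : ℕ} {A B : Matrix (Fin m) (Fin m) ℂ}
    (hA : A.IsHermitian) (hB : B.IsHermitian) : Prop :=
  (∀ l : Fin m, ∑ k ∈ Finset.Iic l, sortedEigs hA k ≤ ∑ k ∈ Finset.Iic l, sortedEigs hB k) ∧
  (∑ k, sortedEigs hA k = ∑ k, sortedEigs hB k)

section Aux

open Polynomial

variable {m : ℕ} {A : Matrix (Fin m) (Fin m) ℂ}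

lemma spectral' (hA : A.IsHermitian) :
    A = (Matrix.IsHermitian.eigenvectorUnitary hA : Matrix (Fin m) (Fin m) ℂ) *
    Matrix.diagonal (fun i => ((hA.eigenvalues i : ℝ) : ℂ)) *
    (star (Matrix.IsHermitian.eigenvectorUnitary hA : Matrix (Fin m) (Fin m) ℂ)) := by
  convert hA.spectral_theorem using 2
  rfl

lemma unitary_mul_star (hA : A.IsHermitian) :
    (Matrix.IsHermitian.eigenvectorUnitary hA : Matrix (Fin m) (Fin m) ℂ) *
    (star (Matrix.IsHermitian.eigenvectorUnitary hA : Matrix (Fin m) (Fin m) ℂ)) = 1 :=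
  (Matrix.mem_unitaryGroup_iff).mp (Matrix.IsHermitian.eigenvectorUnitary hA).2

lemma trace_eq' (hA : A.IsHermitian) : A.trace = ((∑ i, hA.eigenvalues i : ℝ) : ℂ) := by
  conv_lhs => rw [spectral' hA]
  rw [Matrix.trace_mul_cycle]
  rw [(Matrix.mem_unitaryGroup_iff').mp (Matrix.IsHermitian.eigenvectorUnitary hA).2, one_mul,
    Matrix.trace_diagonal]
  push_cast
  rfl

lemma charpoly_diag {m' : ℕ} (d : Fin m' → ℂ) :
    (Matrix.diagonal d).charpoly = ∏ i, (X - C (d i)) := by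
  have h : Matrix.charmatrix (Matrix.diagonal d) = Matrix.diagonal (fun i => X - C (d i)) := by
    ext i j
    by_cases hij : i = j
    · subst hij; simp
    · simp [Matrix.charmatrix_apply_ne _ _ _ hij, Matrix.diagonal_apply_ne _ hij,
        Matrix.diagonal_apply_ne d hij]
  rw [Matrix.charpoly, h, Matrix.det_diagonal]

lemma charpoly_conj {m' : ℕ} (U M V : Matrix (Fin m') (Fin m') ℂ) (h : U * V = 1) :
    (U * M * V).charpoly = M.charpoly := by
  have hc : Matrix.charmatrix (U * M * V)
      = (C : ℂ →+* ℂ[X]).mapMatrix U * Matrix.charmatrix M * (C : ℂ →+* ℂ[X]).mapMatrix V := by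
    rw [Matrix.charmatrix, Matrix.charmatrix, mul_sub, sub_mul, map_mul, map_mul]
    congr 1
    rw [mul_assoc, (Matrix.scalar_commute (X : Polynomial ℂ) (fun r => mul_comm _ _)
      (C.mapMatrix V)).eq, ← mul_assoc, ← map_mul, h, map_one, one_mul]
  rw [Matrix.charpoly, Matrix.charpoly, hc, Matrix.det_mul, Matrix.det_mul]
  have h2 : ((C : ℂ →+* ℂ[X]).mapMatrix U).det * ((C : ℂ →+* ℂ[X]).mapMatrix V).det = 1 := by
    rw [← Matrix.det_mul, ← map_mul, h, map_one, Matrix.det_one]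
  calc ((C : ℂ →+* ℂ[X]).mapMatrix U).det * (Matrix.charmatrix M).det
        * ((C : ℂ →+* ℂ[X]).mapMatrix V).det
      = ((C : ℂ →+* ℂ[X]).mapMatrix U).det * ((C : ℂ →+* ℂ[X]).mapMatrix V).det
        * (Matrix.charmatrix M).det := by ring
    _ = (Matrix.charmatrix M).det := by rw [h2, one_mul]

lemma charpoly_eq' (hA : A.IsHermitian) :
    A.charpoly = ∏ i, (X - C ((hA.eigenvalues i : ℝ) : ℂ)) := by
  conv_lhs => rw [spectral' hA]
  rw [charpoly_conj _ _ _ (unitary_mul_star hA), charpoly_diag]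

lemma roots_eq (hA : A.IsHermitian) :
    A.charpoly.roots = Finset.univ.val.map (fun i => ((hA.eigenvalues i : ℝ) : ℂ)) := by
  rw [charpoly_eq' hA, Finset.prod_eq_multiset_prod]
  have hmm : Multiset.map (fun i => X - C ((hA.eigenvalues i : ℝ) : ℂ)) Finset.univ.val
      = Multiset.map (fun a => X - C a)
        (Multiset.map (fun i => ((hA.eigenvalues i : ℝ) : ℂ)) Finset.univ.val) := by
    rw [Multiset.map_map]; rfl
  rw [hmm, Polynomial.roots_multiset_prod_X_sub_C]

lemma charpoly_smul (hA : A.IsHermitian) (c : ℝ) :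
    ((c : ℂ) • A).charpoly = ∏ i, (X - C ((c * hA.eigenvalues i : ℝ) : ℂ)) := by
  have hd : (c : ℂ) • A = (Matrix.IsHermitian.eigenvectorUnitary hA : Matrix (Fin m) (Fin m) ℂ) *
      Matrix.diagonal (fun i => ((c * hA.eigenvalues i : ℝ) : ℂ)) *
      (star (Matrix.IsHermitian.eigenvectorUnitary hA : Matrix (Fin m) (Fin m) ℂ)) := by
    have hD : Matrix.diagonal (fun i => ((c * hA.eigenvalues i : ℝ) : ℂ))
        = (c : ℂ) • Matrix.diagonal (fun i => ((hA.eigenvalues i : ℝ) : ℂ)) := by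
      ext i j
      rcases eq_or_ne i j with h | h
      · subst h; push_cast; simp
      · simp [Matrix.diagonal_apply_ne _ h]
    rw [hD, Matrix.mul_smul, Matrix.smul_mul]
    conv_lhs => rw [spectral' hA]
  rw [hd, charpoly_conj _ _ _ (unitary_mul_star hA), charpoly_diag]

lemma eig_multiset_smul (hA : A.IsHermitian)
    (c : ℝ) (hcA : ((c : ℂ) • A).IsHermitian) :
    Finset.univ.val.map hcA.eigenvalues
      = Finset.univ.val.map (fun i => c * hA.eigenvalues i) := by
  have h1 := roots_eq hcA
  have hmm : Multiset.map (fun i => X - C ((c * hA.eigenvalues i : ℝ) : ℂ)) Finset.univ.val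
      = Multiset.map (fun a => X - C a)
        (Multiset.map (fun i => ((c * hA.eigenvalues i : ℝ) : ℂ)) Finset.univ.val) := by
    rw [Multiset.map_map]; rfl
  rw [charpoly_smul hA c, Finset.prod_eq_multiset_prod, hmm,
    Polynomial.roots_multiset_prod_X_sub_C] at h1
  have h2 : Multiset.map (Complex.ofReal) (Finset.univ.val.map hcA.eigenvalues)
      = Multiset.map (Complex.ofReal)
        (Finset.univ.val.map (fun i => c * hA.eigenvalues i)) := by
    rw [Multiset.map_map, Multiset.map_map]
    exact (h1.symm.trans (by rfl)).trans (by rfl)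
  exact Multiset.map_injective Complex.ofReal_injective h2

lemma mono_unique {f g : Fin m → ℝ} (hf : Monotone f) (hg : Monotone g)
    (h : Finset.univ.val.map f = Finset.univ.val.map g) : f = g := by
  have hl : (List.ofFn f) = (List.ofFn g) := by
    apply List.Perm.eq_of_sortedLE hf.sortedLE_ofFn hg.sortedLE_ofFn
    rw [List.ofFn_eq_map, List.ofFn_eq_map, ← Multiset.coe_eq_coe]
    simpa [Fin.univ_def, ← Multiset.map_coe] using h
  exact List.ofFn_inj.mp hl

lemma sorted_multiset (f : Fin m → ℝ) :
    Finset.univ.val.map (fun i => f (Tuple.sort f i)) = Finset.univ.val.map f := by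
  have : Multiset.map (fun i => f (Tuple.sort f i)) Finset.univ.val
      = Multiset.map f (Multiset.map (Tuple.sort f) Finset.univ.val) := by
    rw [Multiset.map_map]; rfl
  rw [this, Multiset.map_univ_val_equiv]

lemma sortedEigs_smul (hA : A.IsHermitian)
    {c : ℝ} (hc : 0 ≤ c) (hcA : ((c : ℂ) • A).IsHermitian) :
    sortedEigs hcA = fun i => c * sortedEigs hA i := by
  have hkey : (fun i => hcA.eigenvalues (Tuple.sort hcA.eigenvalues i))
      = fun i => c * hA.eigenvalues (Tuple.sort hA.eigenvalues i) := by
    refine mono_unique ?_ ?_ ?_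
    · exact Tuple.monotone_sort hcA.eigenvalues
    · intro i j hij
      exact mul_le_mul_of_nonneg_left (Tuple.monotone_sort hA.eigenvalues hij) hc
    · calc Finset.univ.val.map (fun i => hcA.eigenvalues (Tuple.sort hcA.eigenvalues i))
          = Finset.univ.val.map hcA.eigenvalues := sorted_multiset _
        _ = Finset.univ.val.map (fun i => c * hA.eigenvalues i) := eig_multiset_smul hA c hcA
        _ = Multiset.map (fun x => c * x) (Finset.univ.val.map hA.eigenvalues) := by
            rw [Multiset.map_map]; rfl
        _ = Multiset.map (fun x => c * x)
              (Finset.univ.val.map (fun i => hA.eigenvalues (Tuple.sort hA.eigenvalues i))) := by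
            rw [sorted_multiset]
        _ = Finset.univ.val.map (fun i => c * hA.eigenvalues (Tuple.sort hA.eigenvalues i)) := by
            rw [Multiset.map_map]; rfl
  funext i
  exact congrFun hkey i.rev

lemma sortedEigs_sum (hA : A.IsHermitian) :
    ∑ i, sortedEigs hA i = ∑ i, hA.eigenvalues i := by
  have h1 := Equiv.sum_comp (Fin.revPerm)
    (fun j => hA.eigenvalues (Tuple.sort hA.eigenvalues j))
  have h2 := Equiv.sum_comp (Tuple.sort hA.eigenvalues) hA.eigenvalues
  exact h1.trans h2

lemma norm_diagonal_le (d : Fin m → ℂ) {t : ℝ} (ht : 0 ≤ t)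
    (h : ∀ i, ‖d i‖ ≤ t) : ‖Matrix.diagonal d‖ ≤ t := by
  rw [Matrix.l2_opNorm_def]
  refine ContinuousLinearMap.opNorm_le_bound _ ht (fun x => ?_)
  have hx : ∀ y : EuclideanSpace ℂ (Fin m), ‖y‖ = Real.sqrt (∑ i, ‖y i‖ ^ 2) := fun y => by
    rw [EuclideanSpace.norm_eq]
  show ‖Matrix.toEuclideanLin (Matrix.diagonal d) x‖ ≤ t * ‖x‖
  rw [hx, hx]
  have hcomp : ∀ i : Fin m,
      ‖(Matrix.toEuclideanLin (Matrix.diagonal d) x) i‖ = ‖d i * x i‖ := fun i => by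
    rw [Matrix.toEuclideanLin_apply]
    congr 1
    exact Matrix.mulVec_diagonal d _ i
  calc Real.sqrt (∑ i, ‖(Matrix.toEuclideanLin (Matrix.diagonal d) x) i‖ ^ 2)
      ≤ Real.sqrt (∑ i, t ^ 2 * ‖x i‖ ^ 2) := by
        apply Real.sqrt_le_sqrt
        apply Finset.sum_le_sum
        intro i _
        rw [hcomp i, norm_mul, mul_pow]
        have h0 : (0:ℝ) ≤ ‖x i‖ ^ 2 := by positivity
        exact mul_le_mul_of_nonneg_right (pow_le_pow_left₀ (norm_nonneg _) (h i) 2) h0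
    _ = t * Real.sqrt (∑ i, ‖x i‖ ^ 2) := by
        rw [← Finset.mul_sum, Real.sqrt_mul (by positivity), Real.sqrt_sq ht]

lemma norm_unitary_le (U : Matrix (Fin m) (Fin m) ℂ)
    (hU : U ∈ Matrix.unitaryGroup (Fin m) ℂ) : ‖U‖ ≤ 1 := by
  have h1 : ‖(1 : Matrix (Fin m) (Fin m) ℂ)‖ ≤ 1 := by
    rw [← Matrix.diagonal_one]
    exact norm_diagonal_le _ zero_le_one (by simp)
  have h2 := Matrix.l2_opNorm_conjTranspose_mul_self U
  have h3 : Uᴴ * U = 1 := by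
    rw [← Matrix.star_eq_conjTranspose]
    exact Matrix.mem_unitaryGroup_iff'.mp hU
  rw [h3] at h2
  nlinarith [norm_nonneg U]

lemma norm_le_sum_eig (hA : A.PosSemidef) :
    ‖A‖ ≤ ∑ i, hA.isHermitian.eigenvalues i := by
  set t := ∑ i, hA.isHermitian.eigenvalues i with hts
  have hnn : ∀ i, 0 ≤ hA.isHermitian.eigenvalues i := hA.eigenvalues_nonneg
  have ht : 0 ≤ t := Finset.sum_nonneg (fun i _ => hnn i)
  have hev : ∀ i, hA.isHermitian.eigenvalues i ≤ t := fun i =>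
    Finset.single_le_sum (f := hA.isHermitian.eigenvalues) (fun j _ => hnn j) (Finset.mem_univ i)
  set V := (Matrix.IsHermitian.eigenvectorUnitary hA.isHermitian : Matrix (Fin m) (Fin m) ℂ)
  have hVU : V ∈ Matrix.unitaryGroup (Fin m) ℂ :=
    (Matrix.IsHermitian.eigenvectorUnitary hA.isHermitian).2
  have hD : ‖Matrix.diagonal (fun i => ((hA.isHermitian.eigenvalues i : ℝ) : ℂ))‖ ≤ t := by
    apply norm_diagonal_le _ ht
    intro i
    rw [Complex.norm_real, Real.norm_eq_abs, abs_of_nonneg (hnn i)]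
    exact hev i
  conv_lhs => rw [spectral' hA.isHermitian]
  calc ‖V * Matrix.diagonal (fun i => ((hA.isHermitian.eigenvalues i : ℝ) : ℂ)) * star V‖
      ≤ ‖V * Matrix.diagonal (fun i => ((hA.isHermitian.eigenvalues i : ℝ) : ℂ))‖ * ‖star V‖ :=
        Matrix.l2_opNorm_mul _ _
    _ ≤ ‖V‖ * ‖Matrix.diagonal (fun i => ((hA.isHermitian.eigenvalues i : ℝ) : ℂ))‖ * ‖star V‖ := by
        apply mul_le_mul_of_nonneg_right (Matrix.l2_opNorm_mul _ _) (norm_nonneg _)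
    _ ≤ 1 * t * 1 := by
        have hsv : ‖star V‖ ≤ 1 := by
          rw [Matrix.star_eq_conjTranspose, Matrix.l2_opNorm_conjTranspose]
          exact norm_unitary_le V hVU
        have := norm_unitary_le V hVU
        have hd0 := norm_nonneg
          (Matrix.diagonal (fun i => ((hA.isHermitian.eigenvalues i : ℝ) : ℂ)))
        have hv0 := norm_nonneg V
        have hsv0 := norm_nonneg (star V)
        have s1 : ‖V‖ * ‖Matrix.diagonal (fun i => ((hA.isHermitian.eigenvalues i : ℝ) : ℂ))‖
            ≤ 1 * t := mul_le_mul this hD hd0 zero_le_one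
        exact mul_le_mul s1 hsv hsv0 (by positivity)
    _ = t := by ring

lemma psd_smul {c : ℝ} (hc : 0 ≤ c) (hA : A.PosSemidef) : ((c : ℂ) • A).PosSemidef := by
  exact hA.smul (by exact_mod_cast hc)

end Aux

theorem stmt5 (m : ℕ) (A B : Matrix (Fin m) (Fin m) ℂ)
    (hA : A.PosSemidef) (hA1 : ((1 : Matrix (Fin m) (Fin m) ℂ) - A).PosSemidef)
    (hB : B.PosSemidef) (hB1 : ((1 : Matrix (Fin m) (Fin m) ℂ) - B).PosSemidef)
    (hmaj : Maj hA.isHermitian hB.isHermitian)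
    (n : ℕ) (hn : 2 ≤ n) :
    ∃ (A' B' : Matrix (Fin m) (Fin m) ℂ)
      (hA' : A'.PosSemidef) (_ : ((1 : Matrix (Fin m) (Fin m) ℂ) - A').PosSemidef)
      (hB' : B'.PosSemidef) (_ : ((1 : Matrix (Fin m) (Fin m) ℂ) - B').PosSemidef),
      Maj hA'.isHermitian hB'.isHermitian ∧
      Matrix.trace A' = Matrix.trace B' ∧
      (∃ k : ℕ, Matrix.trace A' = (k : ℂ) / ((n : ℂ) - 1)) ∧
      ‖A - A'‖ < 2 / ((n : ℝ) - 1) ∧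
      ‖B - B'‖ < 2 / ((n : ℝ) - 1) := by
  classical
  set t : ℝ := ∑ i, hA.isHermitian.eigenvalues i with hts
  have htB : (∑ i, hB.isHermitian.eigenvalues i) = t := by
    have := hmaj.2
    rw [sortedEigs_sum hA.isHermitian, sortedEigs_sum hB.isHermitian] at this
    exact this.symm
  have ht0 : 0 ≤ t := Finset.sum_nonneg (fun i _ => hA.eigenvalues_nonneg i)
  set r : ℝ := (n : ℝ) - 1 with hrs
  have hr : 0 < r := by
    have : (2 : ℝ) ≤ (n : ℝ) := by exact_mod_cast hn
    simp only [hrs]; linarith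
  set k : ℕ := ⌊t * r⌋₊ with hks
  set c : ℝ := if t = 0 then 1 else k / (t * r) with hcs
  have hc0 : 0 ≤ c := by
    rw [hcs]
    split_ifs with h
    · norm_num
    · positivity
  have hc1 : c ≤ 1 := by
    rw [hcs]
    split_ifs with h
    · exact le_refl 1
    · have htpos : 0 < t := lt_of_le_of_ne ht0 (Ne.symm h)
      have htr : 0 < t * r := mul_pos htpos hr
      rw [div_le_one htr]
      exact Nat.floor_le htr.le
  have hct : c * t = k / r := by
    rw [hcs]
    split_ifs with h
    · rw [hks, h]
      simp
    · have htpos : 0 < t := lt_of_le_of_ne ht0 (Ne.symm h)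
      field_simp
  have hrem : (1 - c) * t < 1 / r := by
    have hlt : t * r < k + 1 := Nat.lt_floor_add_one (t * r)
    rw [sub_mul, one_mul, hct, sub_lt_iff_lt_add, ← add_div, lt_div_iff₀ hr]
    linarith
  have h12 : 1 / r < 2 / r := by gcongr <;> norm_num
  have hrem2 : (1 - c) * t < 2 / r := lt_trans hrem h12
  -- the approximants
  have hA' : ((c : ℂ) • A).PosSemidef := psd_smul hc0 hA
  have hB' : ((c : ℂ) • B).PosSemidef := psd_smul hc0 hB
  have hone : ∀ (M : Matrix (Fin m) (Fin m) ℂ), M.PosSemidef →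
      ((1 : Matrix (Fin m) (Fin m) ℂ) - M).PosSemidef →
      ((1 : Matrix (Fin m) (Fin m) ℂ) - (c : ℂ) • M).PosSemidef := by
    intro M hM hM1
    have key : (1 : Matrix (Fin m) (Fin m) ℂ) - (c : ℂ) • M
        = ((1 : Matrix (Fin m) (Fin m) ℂ) - M) + ((1 - c : ℝ) : ℂ) • M := by
      push_cast
      rw [sub_smul, one_smul]
      abel
    rw [key]
    exact hM1.add (psd_smul (by linarith) hM)
  have hnorm : ∀ (M : Matrix (Fin m) (Fin m) ℂ) (hM : M.PosSemidef),
      (∑ i, hM.isHermitian.eigenvalues i) = t → ‖M - (c : ℂ) • M‖ < 2 / r := by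
    intro M hM hMt
    have hMsub : M - (c : ℂ) • M = ((1 - c : ℝ) : ℂ) • M := by
      push_cast
      rw [sub_smul, one_smul]
    rw [hMsub, norm_smul]
    have hcn : ‖((1 - c : ℝ) : ℂ)‖ = 1 - c := by
      rw [Complex.norm_real, Real.norm_eq_abs, abs_of_nonneg (by linarith)]
    rw [hcn]
    calc (1 - c) * ‖M‖ ≤ (1 - c) * t := by
          apply mul_le_mul_of_nonneg_left _ (by linarith : (0:ℝ) ≤ 1 - c)
          rw [← hMt]
          exact norm_le_sum_eig hM
      _ < 2 / r := hrem2
  refine ⟨(c : ℂ) • A, (c : ℂ) • B, hA', hone A hA hA1, hB', hone B hB hB1, ?_, ?_, ?_, ?_, ?_⟩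
  · constructor
    · intro l
      rw [sortedEigs_smul hA.isHermitian hc0 hA'.isHermitian,
        sortedEigs_smul hB.isHermitian hc0 hB'.isHermitian]
      simp only
      rw [← Finset.mul_sum, ← Finset.mul_sum]
      exact mul_le_mul_of_nonneg_left (hmaj.1 l) hc0
    · rw [sortedEigs_smul hA.isHermitian hc0 hA'.isHermitian,
        sortedEigs_smul hB.isHermitian hc0 hB'.isHermitian]
      simp only
      rw [← Finset.mul_sum, ← Finset.mul_sum, hmaj.2]
  · rw [Matrix.trace_smul, Matrix.trace_smul, trace_eq' hA.isHermitian,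
      trace_eq' hB.isHermitian, htB]
  · refine ⟨k, ?_⟩
    rw [Matrix.trace_smul, trace_eq' hA.isHermitian, smul_eq_mul, ← Complex.ofReal_mul, hct,
      hrs]
    push_cast
    ring
  · have := hnorm A hA rfl
    rwa [hrs] at this
  · have := hnorm B hB htB
    rwa [hrs] at this
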